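/- Let κ,ε>0, λ≥0, and 0 ≤ m ≤ M, and let ρ : [0,1] → ℝ be differentiable with continuous derivative ρ_x satisfying m ≤ |ρ_x(x)| ≤ M on [0,1] with ρ_x nowhere zero. Let θ ∈ L²(0,1), let u satisfy Bu = θ (with the boundary conditions of B), and let w_m, w_M be four times continuously differentiable solutions of L_m w_m = ρ_x θ and L_M w_M = ρ_x θ with w_m = w_m'' = w_M = w_M'' = 0 at x ∈ {0,1}. Then ∫₀¹ (θρ_x) w_M dx ≤ ∫₀¹ θ u dx ≤ ∫₀¹ (θρ_x) w_m dx; equivalently, ∫₀¹θ² − ∫₀¹(θρ_x)w_m ≤ ⟨θ,(I−B^{-1})θ⟩ ≤ ∫₀¹θ² − ∫₀¹(θρ_x)w_M. -/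

import Mathlib

open MeasureTheory Set intervalIntegral

section Helpers

lemma ibp_once (P Q : ℝ → ℝ) (hP : Differentiable ℝ P) (hQ : Differentiable ℝ Q)
    (hP' : Continuous (deriv P)) (hQ' : Continuous (deriv Q))
    (h0 : P 0 * Q 0 = 0) (h1 : P 1 * Q 1 = 0) :
    (∫ x in (0:ℝ)..1, P x * deriv Q x) = - ∫ x in (0:ℝ)..1, deriv P x * Q x := by
  rw [intervalIntegral.integral_mul_deriv_eq_deriv_mul
      (fun x _ => (hP x).hasDerivAt) (fun x _ => (hQ x).hasDerivAt)
      (hP'.intervalIntegrable 0 1) (hQ'.intervalIntegrable 0 1), h0, h1]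
  ring

lemma ibp4 (p q : ℝ → ℝ) (hp : ContDiff ℝ 4 p) (hq : ContDiff ℝ 4 q)
    (hq0 : q 0 = 0) (hq1 : q 1 = 0)
    (hp0 : iteratedDeriv 2 p 0 = 0) (hp1 : iteratedDeriv 2 p 1 = 0) :
    (∫ x in (0:ℝ)..1, iteratedDeriv 4 p x * q x)
      = ∫ x in (0:ℝ)..1, iteratedDeriv 2 p x * iteratedDeriv 2 q x := by
  have e4 : iteratedDeriv 4 p = deriv (iteratedDeriv 3 p) := iteratedDeriv_succ
  have e3 : iteratedDeriv 3 p = deriv (iteratedDeriv 2 p) := iteratedDeriv_succ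
  have e2q : iteratedDeriv 2 q = deriv (deriv q) := by
    rw [iteratedDeriv_succ, iteratedDeriv_one]
  have e1q : deriv q = iteratedDeriv 1 q := (iteratedDeriv_one (f := q)).symm
  have hd3 : Differentiable ℝ (iteratedDeriv 3 p) := hp.differentiable_iteratedDeriv 3 (by norm_num)
  have hd2 : Differentiable ℝ (iteratedDeriv 2 p) := hp.differentiable_iteratedDeriv 2 (by norm_num)
  have hq1d : Differentiable ℝ (deriv q) := by
    rw [e1q]; exact hq.differentiable_iteratedDeriv 1 (by norm_num)
  have hc4 : Continuous (iteratedDeriv 4 p) := hp.continuous_iteratedDeriv 4 (by norm_num)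
  have hc3 : Continuous (iteratedDeriv 3 p) := hp.continuous_iteratedDeriv 3 (by norm_num)
  have hc2q : Continuous (iteratedDeriv 2 q) := hq.continuous_iteratedDeriv 2 (by norm_num)
  have step1 : (∫ x in (0:ℝ)..1, iteratedDeriv 4 p x * q x)
      = - ∫ x in (0:ℝ)..1, deriv q x * iteratedDeriv 3 p x := by
    rw [show (∫ x in (0:ℝ)..1, iteratedDeriv 4 p x * q x)
        = ∫ x in (0:ℝ)..1, q x * deriv (iteratedDeriv 3 p) x by
      rw [← e4]; exact intervalIntegral.integral_congr (fun x _ => mul_comm _ _)]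
    exact ibp_once q (iteratedDeriv 3 p) (hq.differentiable (by norm_num)) hd3
      (hq.continuous_deriv (by norm_num)) (by rw [← e4]; exact hc4)
      (by rw [hq0]; ring) (by rw [hq1]; ring)
  have step2 : (∫ x in (0:ℝ)..1, deriv q x * iteratedDeriv 3 p x)
      = - ∫ x in (0:ℝ)..1, iteratedDeriv 2 q x * iteratedDeriv 2 p x := by
    rw [show (∫ x in (0:ℝ)..1, deriv q x * iteratedDeriv 3 p x)
        = ∫ x in (0:ℝ)..1, deriv q x * deriv (iteratedDeriv 2 p) x by rw [← e3]]
    rw [ibp_once (deriv q) (iteratedDeriv 2 p) hq1d hd2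
      (by rw [← e2q]; exact hc2q) (by rw [← e3]; exact hc3)
      (by rw [hp0]; ring) (by rw [hp1]; ring)]
    rw [← e2q]
  rw [step1, step2, neg_neg]
  exact intervalIntegral.integral_congr (fun x _ => mul_comm _ _)

lemma ibp2 (p q : ℝ → ℝ) (hp : ContDiff ℝ 4 p) (hq : ContDiff ℝ 4 q)
    (hq0 : q 0 = 0) (hq1 : q 1 = 0) :
    (∫ x in (0:ℝ)..1, iteratedDeriv 2 p x * q x)
      = - ∫ x in (0:ℝ)..1, deriv p x * deriv q x := by
  have e2 : iteratedDeriv 2 p = deriv (deriv p) := by rw [iteratedDeriv_succ, iteratedDeriv_one]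
  have e1 : deriv p = iteratedDeriv 1 p := (iteratedDeriv_one (f := p)).symm
  have hdp : Differentiable ℝ (deriv p) := by
    rw [e1]; exact hp.differentiable_iteratedDeriv 1 (by norm_num)
  have hc2 : Continuous (iteratedDeriv 2 p) := hp.continuous_iteratedDeriv 2 (by norm_num)
  rw [show (∫ x in (0:ℝ)..1, iteratedDeriv 2 p x * q x)
      = ∫ x in (0:ℝ)..1, q x * deriv (deriv p) x by
    rw [← e2]; exact intervalIntegral.integral_congr (fun x _ => mul_comm _ _)]
  rw [ibp_once q (deriv p) (hq.differentiable (by norm_num)) hdp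
    (hq.continuous_deriv (by norm_num)) (by rw [← e2]; exact hc2)
    (by rw [hq0]; ring) (by rw [hq1]; ring)]
  congr 1
  exact intervalIntegral.integral_congr (fun x _ => mul_comm _ _)

lemma sym_form (ε lam : ℝ) (w p q : ℝ → ℝ) (hw : Continuous w)
    (hp : ContDiff ℝ 4 p) (hq : ContDiff ℝ 4 q)
    (hq0 : q 0 = 0) (hq1 : q 1 = 0)
    (hp0 : iteratedDeriv 2 p 0 = 0) (hp1 : iteratedDeriv 2 p 1 = 0) :
    (∫ x in (0:ℝ)..1, (ε * iteratedDeriv 4 p x - lam * iteratedDeriv 2 p x + w x * p x) * q x)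
      = ε * (∫ x in (0:ℝ)..1, iteratedDeriv 2 p x * iteratedDeriv 2 q x)
        + lam * (∫ x in (0:ℝ)..1, deriv p x * deriv q x)
        + ∫ x in (0:ℝ)..1, w x * p x * q x := by
  have hc4 : Continuous (iteratedDeriv 4 p) := hp.continuous_iteratedDeriv 4 (by norm_num)
  have hc2 : Continuous (iteratedDeriv 2 p) := hp.continuous_iteratedDeriv 2 (by norm_num)
  have hcq : Continuous q := hq.continuous
  have hcp : Continuous p := hp.continuous
  have i1 : IntervalIntegrable (fun x => ε * (iteratedDeriv 4 p x * q x)) volume 0 1 :=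
    (continuous_const.mul (hc4.mul hcq)).intervalIntegrable 0 1
  have i2 : IntervalIntegrable (fun x => lam * (iteratedDeriv 2 p x * q x)) volume 0 1 :=
    (continuous_const.mul (hc2.mul hcq)).intervalIntegrable 0 1
  have i3 : IntervalIntegrable (fun x => w x * p x * q x) volume 0 1 :=
    ((hw.mul hcp).mul hcq).intervalIntegrable 0 1
  have expand : (∫ x in (0:ℝ)..1,
      (ε * iteratedDeriv 4 p x - lam * iteratedDeriv 2 p x + w x * p x) * q x)
      = (∫ x in (0:ℝ)..1, ε * (iteratedDeriv 4 p x * q x))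
        - (∫ x in (0:ℝ)..1, lam * (iteratedDeriv 2 p x * q x))
        + ∫ x in (0:ℝ)..1, w x * p x * q x := by
    rw [← intervalIntegral.integral_sub i1 i2, ← intervalIntegral.integral_add (i1.sub i2) i3]
    exact intervalIntegral.integral_congr (fun x _ => by ring)
  rw [expand, intervalIntegral.integral_const_mul, intervalIntegral.integral_const_mul,
    ibp4 p q hp hq hq0 hq1 hp0 hp1, ibp2 p q hp hq hq0 hq1]
  ring

lemma int_congr_Ioo (f h : ℝ → ℝ) (heq : ∀ x ∈ Ioo (0:ℝ) 1, f x = h x) :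
    (∫ x in (0:ℝ)..1, f x) = ∫ x in (0:ℝ)..1, h x := by
  apply intervalIntegral.integral_congr_ae
  have h1 : ∀ᵐ x : ℝ, x ≠ (1:ℝ) := by
    refine MeasureTheory.ae_iff.mpr ?_
    simpa using measure_singleton (1:ℝ)
  filter_upwards [h1] with x hx hxI
  rw [Set.uIoc_of_le (by norm_num : (0:ℝ) ≤ 1)] at hxI
  exact heq x ⟨hxI.1, lt_of_le_of_ne hxI.2 hx⟩

lemma quad_expand (w f h : ℝ → ℝ) (hw : Continuous w) (hf : Continuous f) (hh : Continuous h) :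
    (∫ x in (0:ℝ)..1, w x * (f x - h x) ^ 2)
      = (∫ x in (0:ℝ)..1, w x * f x * f x) - 2 * (∫ x in (0:ℝ)..1, w x * f x * h x)
        + ∫ x in (0:ℝ)..1, w x * h x * h x := by
  have i1 : IntervalIntegrable (fun x => w x * f x * f x) volume 0 1 :=
    ((hw.mul hf).mul hf).intervalIntegrable 0 1
  have i2 : IntervalIntegrable (fun x => 2 * (w x * f x * h x)) volume 0 1 :=
    (continuous_const.mul ((hw.mul hf).mul hh)).intervalIntegrable 0 1
  have i3 : IntervalIntegrable (fun x => w x * h x * h x) volume 0 1 :=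
    ((hw.mul hh).mul hh).intervalIntegrable 0 1
  rw [show (2 : ℝ) * (∫ x in (0:ℝ)..1, w x * f x * h x)
      = ∫ x in (0:ℝ)..1, 2 * (w x * f x * h x) from
    (intervalIntegral.integral_const_mul 2 _).symm]
  rw [← intervalIntegral.integral_sub i1 i2, ← intervalIntegral.integral_add (i1.sub i2) i3]
  exact intervalIntegral.integral_congr (fun x _ => by ring)

lemma quad_expand' (f h : ℝ → ℝ) (hf : Continuous f) (hh : Continuous h) :
    (∫ x in (0:ℝ)..1, (f x - h x) ^ 2)
      = (∫ x in (0:ℝ)..1, f x * f x) - 2 * (∫ x in (0:ℝ)..1, f x * h x)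
        + ∫ x in (0:ℝ)..1, h x * h x := by
  have i1 : IntervalIntegrable (fun x => f x * f x) volume 0 1 :=
    (hf.mul hf).intervalIntegrable 0 1
  have i2 : IntervalIntegrable (fun x => 2 * (f x * h x)) volume 0 1 :=
    (continuous_const.mul (hf.mul hh)).intervalIntegrable 0 1
  have i3 : IntervalIntegrable (fun x => h x * h x) volume 0 1 :=
    (hh.mul hh).intervalIntegrable 0 1
  rw [show (2 : ℝ) * (∫ x in (0:ℝ)..1, f x * h x)
      = ∫ x in (0:ℝ)..1, 2 * (f x * h x) from
    (intervalIntegral.integral_const_mul 2 _).symm]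
  rw [← intervalIntegral.integral_sub i1 i2, ← intervalIntegral.integral_add (i1.sub i2) i3]
  exact intervalIntegral.integral_congr (fun x _ => by ring)

lemma int_split3 (f1 f2 f3 : ℝ → ℝ) (h1 : Continuous f1) (h2 : Continuous f2)
    (h3 : Continuous f3) :
    (∫ x in (0:ℝ)..1, (f1 x + f2 x + f3 x))
      = (∫ x in (0:ℝ)..1, f1 x) + (∫ x in (0:ℝ)..1, f2 x) + ∫ x in (0:ℝ)..1, f3 x := by
  rw [intervalIntegral.integral_add (f := fun x => f1 x + f2 x)
      ((h1.add h2).intervalIntegrable 0 1)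
      (h3.intervalIntegrable 0 1),
    intervalIntegral.integral_add (h1.intervalIntegrable 0 1) (h2.intervalIntegrable 0 1)]

lemma int_split2 (f1 f2 : ℝ → ℝ) (h1 : Continuous f1) (h2 : Continuous f2) :
    (∫ x in (0:ℝ)..1, (f1 x + f2 x))
      = (∫ x in (0:ℝ)..1, f1 x) + ∫ x in (0:ℝ)..1, f2 x :=
  intervalIntegral.integral_add (h1.intervalIntegrable 0 1) (h2.intervalIntegrable 0 1)

end Helpers

/-- The operator `B` associated with the HV Hessian:
`Bv = (1/ρ_x)[ε (v/ρ_x)'''' − λ (v/ρ_x)'' + (v/ρ_x)(κ + ρ_x²)]`,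
where `ρx` denotes the derivative `ρ_x`. -/
noncomputable def Bop (κ lam ε : ℝ) (ρx : ℝ → ℝ) (v : ℝ → ℝ) (x : ℝ) : ℝ :=
  (1 / ρx x) * (ε * iteratedDeriv 4 (fun y => v y / ρx y) x
    - lam * iteratedDeriv 2 (fun y => v y / ρx y) x
    + (v x / ρx x) * (κ + (ρx x) ^ 2))

set_option maxHeartbeats 1000000 in
/-- Two-sided comparison of the Hessian quadratic form: if
`Bu = θ`, and `w_m, w_M` solve the constant-coefficient problems
`ε w'''' − λ w'' + (κ+c²) w = ρ_x θ` for `c = m, M` respectively, with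
`w = w'' = 0` at `x ∈ {0,1}`, then `∫₀¹ (θρ_x) w_M ≤ ∫₀¹ θ u ≤ ∫₀¹ (θρ_x) w_m`;
equivalently `∫θ² − ∫(θρ_x)w_m ≤ ⟨θ,(I−B⁻¹)θ⟩ ≤ ∫θ² − ∫(θρ_x)w_M`. -/
theorem hessian_two_sided_comparison
    (κ lam ε m M : ℝ) (hκ : 0 < κ) (hlam : 0 ≤ lam) (hε : 0 < ε)
    (hm : 0 ≤ m) (hmM : m ≤ M)
    (ρ : ℝ → ℝ) (hρ : Differentiable ℝ ρ) (hρx : Continuous (deriv ρ))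
    (hbnd : ∀ x ∈ Icc (0:ℝ) 1,
      deriv ρ x ≠ 0 ∧ m ≤ |deriv ρ x| ∧ |deriv ρ x| ≤ M)
    (θ : ℝ → ℝ) (hθ : MemLp θ 2 (volume.restrict (Ioo (0:ℝ) 1)))
    (u : ℝ → ℝ) (hu : ContDiff ℝ 4 (fun x => u x / deriv ρ x))
    (hu0 : u 0 = 0) (hu1 : u 1 = 0)
    (hu''0 : iteratedDeriv 2 (fun x => u x / deriv ρ x) 0 = 0)
    (hu''1 : iteratedDeriv 2 (fun x => u x / deriv ρ x) 1 = 0)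
    (hBu : ∀ x ∈ Ioo (0:ℝ) 1, Bop κ lam ε (deriv ρ) u x = θ x)
    (wm wM : ℝ → ℝ) (hwm : ContDiff ℝ 4 wm) (hwM : ContDiff ℝ 4 wM)
    (hwmeq : ∀ x ∈ Ioo (0:ℝ) 1,
      ε * iteratedDeriv 4 wm x - lam * iteratedDeriv 2 wm x + (κ + m ^ 2) * wm x
        = deriv ρ x * θ x)
    (hwMeq : ∀ x ∈ Ioo (0:ℝ) 1,
      ε * iteratedDeriv 4 wM x - lam * iteratedDeriv 2 wM x + (κ + M ^ 2) * wM x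
        = deriv ρ x * θ x)
    (hwm0 : wm 0 = 0) (hwm1 : wm 1 = 0)
    (hwm''0 : iteratedDeriv 2 wm 0 = 0) (hwm''1 : iteratedDeriv 2 wm 1 = 0)
    (hwM0 : wM 0 = 0) (hwM1 : wM 1 = 0)
    (hwM''0 : iteratedDeriv 2 wM 0 = 0) (hwM''1 : iteratedDeriv 2 wM 1 = 0) :
    ((∫ x in (0:ℝ)..1, (θ x * deriv ρ x) * wM x) ≤ (∫ x in (0:ℝ)..1, θ x * u x) ∧
      (∫ x in (0:ℝ)..1, θ x * u x) ≤ ∫ x in (0:ℝ)..1, (θ x * deriv ρ x) * wm x) ∧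
    (((∫ x in (0:ℝ)..1, (θ x) ^ 2) - ∫ x in (0:ℝ)..1, (θ x * deriv ρ x) * wm x)
        ≤ (∫ x in (0:ℝ)..1, (θ x) ^ 2) - (∫ x in (0:ℝ)..1, θ x * u x) ∧
      ((∫ x in (0:ℝ)..1, (θ x) ^ 2) - (∫ x in (0:ℝ)..1, θ x * u x))
        ≤ (∫ x in (0:ℝ)..1, (θ x) ^ 2) - ∫ x in (0:ℝ)..1, (θ x * deriv ρ x) * wM x) := by
  set g : ℝ → ℝ := fun x => u x / deriv ρ x with hg_def
  -- continuity facts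
  have hgc : Continuous g := hu.continuous
  have hg1c : Continuous (deriv g) := hu.continuous_deriv (by norm_num)
  have hg2c : Continuous (iteratedDeriv 2 g) := hu.continuous_iteratedDeriv 2 (by norm_num)
  have hwmc : Continuous wm := hwm.continuous
  have hwm1c : Continuous (deriv wm) := hwm.continuous_deriv (by norm_num)
  have hwm2c : Continuous (iteratedDeriv 2 wm) := hwm.continuous_iteratedDeriv 2 (by norm_num)
  have hwMc : Continuous wM := hwM.continuous
  have hwM1c : Continuous (deriv wM) := hwM.continuous_deriv (by norm_num)
  have hwM2c : Continuous (iteratedDeriv 2 wM) := hwM.continuous_iteratedDeriv 2 (by norm_num)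
  have hwρc : Continuous (fun x => κ + deriv ρ x ^ 2) := continuous_const.add (hρx.pow 2)
  -- boundary values of g
  have hg0 : g 0 = 0 := by rw [hg_def]; simp [hu0]
  have hg1 : g 1 = 0 := by rw [hg_def]; simp [hu1]
  -- pointwise identity for the variable-coefficient operator
  have hFρ : ∀ x ∈ Ioo (0:ℝ) 1,
      ε * iteratedDeriv 4 g x - lam * iteratedDeriv 2 g x + (κ + deriv ρ x ^ 2) * g x
        = deriv ρ x * θ x := by
    intro x hx
    have hrx : deriv ρ x ≠ 0 := (hbnd x (Ioo_subset_Icc_self hx)).1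
    have hb := hBu x hx
    rw [Bop] at hb
    rw [← hb, hg_def]
    field_simp
  have hux : ∀ x ∈ Ioo (0:ℝ) 1, u x = g x * deriv ρ x := by
    intro x hx
    have hrx : deriv ρ x ≠ 0 := (hbnd x (Ioo_subset_Icc_self hx)).1
    rw [hg_def]
    field_simp
  -- the symmetric bilinear-form identities
  have hS1 : (∫ x in (0:ℝ)..1,
      (ε * iteratedDeriv 4 g x - lam * iteratedDeriv 2 g x + (κ + deriv ρ x ^ 2) * g x) * g x)
      = ε * (∫ x in (0:ℝ)..1, iteratedDeriv 2 g x * iteratedDeriv 2 g x)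
        + lam * (∫ x in (0:ℝ)..1, deriv g x * deriv g x)
        + ∫ x in (0:ℝ)..1, (κ + deriv ρ x ^ 2) * g x * g x :=
    sym_form ε lam (fun x => κ + deriv ρ x ^ 2) g g hwρc hu hu hg0 hg1 hu''0 hu''1
  have hS3 : (∫ x in (0:ℝ)..1,
      (ε * iteratedDeriv 4 g x - lam * iteratedDeriv 2 g x + (κ + deriv ρ x ^ 2) * g x) * wM x)
      = ε * (∫ x in (0:ℝ)..1, iteratedDeriv 2 g x * iteratedDeriv 2 wM x)
        + lam * (∫ x in (0:ℝ)..1, deriv g x * deriv wM x)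
        + ∫ x in (0:ℝ)..1, (κ + deriv ρ x ^ 2) * g x * wM x :=
    sym_form ε lam (fun x => κ + deriv ρ x ^ 2) g wM hwρc hu hwM hwM0 hwM1 hu''0 hu''1
  have hS4 : (∫ x in (0:ℝ)..1,
      (ε * iteratedDeriv 4 wm x - lam * iteratedDeriv 2 wm x + (κ + m ^ 2) * wm x) * wm x)
      = ε * (∫ x in (0:ℝ)..1, iteratedDeriv 2 wm x * iteratedDeriv 2 wm x)
        + lam * (∫ x in (0:ℝ)..1, deriv wm x * deriv wm x)
        + ∫ x in (0:ℝ)..1, (κ + m ^ 2) * wm x * wm x :=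
    sym_form ε lam (fun _ => κ + m ^ 2) wm wm continuous_const hwm hwm hwm0 hwm1 hwm''0 hwm''1
  have hS5 : (∫ x in (0:ℝ)..1,
      (ε * iteratedDeriv 4 wm x - lam * iteratedDeriv 2 wm x + (κ + m ^ 2) * wm x) * g x)
      = ε * (∫ x in (0:ℝ)..1, iteratedDeriv 2 wm x * iteratedDeriv 2 g x)
        + lam * (∫ x in (0:ℝ)..1, deriv wm x * deriv g x)
        + ∫ x in (0:ℝ)..1, (κ + m ^ 2) * wm x * g x :=
    sym_form ε lam (fun _ => κ + m ^ 2) wm g continuous_const hwm hu hg0 hg1 hwm''0 hwm''1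
  have hS6 : (∫ x in (0:ℝ)..1,
      (ε * iteratedDeriv 4 wM x - lam * iteratedDeriv 2 wM x + (κ + M ^ 2) * wM x) * wM x)
      = ε * (∫ x in (0:ℝ)..1, iteratedDeriv 2 wM x * iteratedDeriv 2 wM x)
        + lam * (∫ x in (0:ℝ)..1, deriv wM x * deriv wM x)
        + ∫ x in (0:ℝ)..1, (κ + M ^ 2) * wM x * wM x :=
    sym_form ε lam (fun _ => κ + M ^ 2) wM wM continuous_const hwM hwM hwM0 hwM1 hwM''0 hwM''1
  -- congruences identifying the integrals with θ
  have hT1 : (∫ x in (0:ℝ)..1, θ x * u x)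
      = ∫ x in (0:ℝ)..1,
        (ε * iteratedDeriv 4 g x - lam * iteratedDeriv 2 g x + (κ + deriv ρ x ^ 2) * g x) * g x := by
    apply int_congr_Ioo
    intro x hx
    rw [hFρ x hx, hux x hx]; ring
  have hT2 : (∫ x in (0:ℝ)..1, θ x * u x)
      = ∫ x in (0:ℝ)..1,
        (ε * iteratedDeriv 4 wm x - lam * iteratedDeriv 2 wm x + (κ + m ^ 2) * wm x) * g x := by
    apply int_congr_Ioo
    intro x hx
    rw [hwmeq x hx, hux x hx]; ring
  have hW1 : (∫ x in (0:ℝ)..1, (θ x * deriv ρ x) * wm x)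
      = ∫ x in (0:ℝ)..1,
        (ε * iteratedDeriv 4 wm x - lam * iteratedDeriv 2 wm x + (κ + m ^ 2) * wm x) * wm x := by
    apply int_congr_Ioo
    intro x hx
    rw [hwmeq x hx]; ring
  have hW2 : (∫ x in (0:ℝ)..1, (θ x * deriv ρ x) * wM x)
      = ∫ x in (0:ℝ)..1,
        (ε * iteratedDeriv 4 wM x - lam * iteratedDeriv 2 wM x + (κ + M ^ 2) * wM x) * wM x := by
    apply int_congr_Ioo
    intro x hx
    rw [hwMeq x hx]; ring
  have hW3 : (∫ x in (0:ℝ)..1, (θ x * deriv ρ x) * wM x)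
      = ∫ x in (0:ℝ)..1,
        (ε * iteratedDeriv 4 g x - lam * iteratedDeriv 2 g x + (κ + deriv ρ x ^ 2) * g x) * wM x := by
    apply int_congr_Ioo
    intro x hx
    rw [hFρ x hx]; ring
  -- splitting of the variable-coefficient zeroth order terms
  have hZg : (∫ x in (0:ℝ)..1, (κ + deriv ρ x ^ 2) * g x * g x)
      = (∫ x in (0:ℝ)..1, (κ + m ^ 2) * g x * g x)
        + ∫ x in (0:ℝ)..1, (deriv ρ x ^ 2 - m ^ 2) * g x ^ 2 := by
    rw [← int_split2 (fun x => (κ + m ^ 2) * g x * g x)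
      (fun x => (deriv ρ x ^ 2 - m ^ 2) * g x ^ 2) (continuous_const.mul hgc |>.mul hgc)
      ((hρx.pow 2).sub continuous_const |>.mul (hgc.pow 2))]
    exact intervalIntegral.integral_congr (fun x _ => by ring)
  have hZM : (∫ x in (0:ℝ)..1, (κ + M ^ 2) * wM x * wM x)
      = (∫ x in (0:ℝ)..1, (κ + deriv ρ x ^ 2) * wM x * wM x)
        + ∫ x in (0:ℝ)..1, (M ^ 2 - deriv ρ x ^ 2) * wM x ^ 2 := by
    rw [← int_split2 (fun x => (κ + deriv ρ x ^ 2) * wM x * wM x)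
      (fun x => (M ^ 2 - deriv ρ x ^ 2) * wM x ^ 2) (hwρc.mul hwMc |>.mul hwMc)
      ((continuous_const.sub (hρx.pow 2)).mul (hwMc.pow 2))]
    exact intervalIntegral.integral_congr (fun x _ => by ring)
  -- nonnegativity of the correction terms
  have hE : 0 ≤ ∫ x in (0:ℝ)..1, (deriv ρ x ^ 2 - m ^ 2) * g x ^ 2 := by
    apply intervalIntegral.integral_nonneg (by norm_num)
    intro x hx
    have h1 : m ^ 2 ≤ deriv ρ x ^ 2 := by
      calc m ^ 2 ≤ |deriv ρ x| ^ 2 := pow_le_pow_left₀ hm (hbnd x hx).2.1 2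
        _ = deriv ρ x ^ 2 := sq_abs _
    exact mul_nonneg (by linarith) (sq_nonneg _)
  have hEM : 0 ≤ ∫ x in (0:ℝ)..1, (M ^ 2 - deriv ρ x ^ 2) * wM x ^ 2 := by
    apply intervalIntegral.integral_nonneg (by norm_num)
    intro x hx
    have h1 : deriv ρ x ^ 2 ≤ M ^ 2 := by
      calc deriv ρ x ^ 2 = |deriv ρ x| ^ 2 := (sq_abs _).symm
        _ ≤ M ^ 2 := pow_le_pow_left₀ (abs_nonneg _) (hbnd x hx).2.2 2
    exact mul_nonneg (by linarith) (sq_nonneg _)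
  -- the quadratic nonnegativity for the m-side
  have hQm : 0 ≤ ∫ x in (0:ℝ)..1,
      (ε * (iteratedDeriv 2 wm x - iteratedDeriv 2 g x) ^ 2
        + lam * (deriv wm x - deriv g x) ^ 2 + (κ + m ^ 2) * (wm x - g x) ^ 2) := by
    apply intervalIntegral.integral_nonneg (by norm_num)
    intro x _
    have h1 : (0:ℝ) ≤ κ + m ^ 2 := by positivity
    exact add_nonneg (add_nonneg (mul_nonneg hε.le (sq_nonneg _))
      (mul_nonneg hlam (sq_nonneg _))) (mul_nonneg h1 (sq_nonneg _))
  have hQM : 0 ≤ ∫ x in (0:ℝ)..1,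
      (ε * (iteratedDeriv 2 wM x - iteratedDeriv 2 g x) ^ 2
        + lam * (deriv wM x - deriv g x) ^ 2 + (κ + deriv ρ x ^ 2) * (wM x - g x) ^ 2) := by
    apply intervalIntegral.integral_nonneg (by norm_num)
    intro x _
    have h1 : (0:ℝ) ≤ κ + deriv ρ x ^ 2 := by positivity
    exact add_nonneg (add_nonneg (mul_nonneg hε.le (sq_nonneg _))
      (mul_nonneg hlam (sq_nonneg _))) (mul_nonneg h1 (sq_nonneg _))
  -- expansion of the quadratic integrals
  have hQmE : (∫ x in (0:ℝ)..1,
      (ε * (iteratedDeriv 2 wm x - iteratedDeriv 2 g x) ^ 2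
        + lam * (deriv wm x - deriv g x) ^ 2 + (κ + m ^ 2) * (wm x - g x) ^ 2))
      = ε * ((∫ x in (0:ℝ)..1, iteratedDeriv 2 wm x * iteratedDeriv 2 wm x)
          - 2 * (∫ x in (0:ℝ)..1, iteratedDeriv 2 wm x * iteratedDeriv 2 g x)
          + ∫ x in (0:ℝ)..1, iteratedDeriv 2 g x * iteratedDeriv 2 g x)
        + lam * ((∫ x in (0:ℝ)..1, deriv wm x * deriv wm x)
          - 2 * (∫ x in (0:ℝ)..1, deriv wm x * deriv g x)
          + ∫ x in (0:ℝ)..1, deriv g x * deriv g x)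
        + ((∫ x in (0:ℝ)..1, (κ + m ^ 2) * wm x * wm x)
          - 2 * (∫ x in (0:ℝ)..1, (κ + m ^ 2) * wm x * g x)
          + ∫ x in (0:ℝ)..1, (κ + m ^ 2) * g x * g x) := by
    rw [int_split3 (fun x => ε * (iteratedDeriv 2 wm x - iteratedDeriv 2 g x) ^ 2)
      (fun x => lam * (deriv wm x - deriv g x) ^ 2) (fun x => (κ + m ^ 2) * (wm x - g x) ^ 2)
      (continuous_const.mul ((hwm2c.sub hg2c).pow 2))
      (continuous_const.mul ((hwm1c.sub hg1c).pow 2))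
      (continuous_const.mul ((hwmc.sub hgc).pow 2)),
      intervalIntegral.integral_const_mul, intervalIntegral.integral_const_mul,
      quad_expand' _ _ hwm2c hg2c, quad_expand' _ _ hwm1c hg1c,
      quad_expand _ _ _ continuous_const hwmc hgc]
  have hQME : (∫ x in (0:ℝ)..1,
      (ε * (iteratedDeriv 2 wM x - iteratedDeriv 2 g x) ^ 2
        + lam * (deriv wM x - deriv g x) ^ 2 + (κ + deriv ρ x ^ 2) * (wM x - g x) ^ 2))
      = ε * ((∫ x in (0:ℝ)..1, iteratedDeriv 2 wM x * iteratedDeriv 2 wM x)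
          - 2 * (∫ x in (0:ℝ)..1, iteratedDeriv 2 wM x * iteratedDeriv 2 g x)
          + ∫ x in (0:ℝ)..1, iteratedDeriv 2 g x * iteratedDeriv 2 g x)
        + lam * ((∫ x in (0:ℝ)..1, deriv wM x * deriv wM x)
          - 2 * (∫ x in (0:ℝ)..1, deriv wM x * deriv g x)
          + ∫ x in (0:ℝ)..1, deriv g x * deriv g x)
        + ((∫ x in (0:ℝ)..1, (κ + deriv ρ x ^ 2) * wM x * wM x)
          - 2 * (∫ x in (0:ℝ)..1, (κ + deriv ρ x ^ 2) * wM x * g x)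
          + ∫ x in (0:ℝ)..1, (κ + deriv ρ x ^ 2) * g x * g x) := by
    rw [int_split3 (fun x => ε * (iteratedDeriv 2 wM x - iteratedDeriv 2 g x) ^ 2)
      (fun x => lam * (deriv wM x - deriv g x) ^ 2)
      (fun x => (κ + deriv ρ x ^ 2) * (wM x - g x) ^ 2)
      (continuous_const.mul ((hwM2c.sub hg2c).pow 2))
      (continuous_const.mul ((hwM1c.sub hg1c).pow 2))
      (hwρc.mul ((hwMc.sub hgc).pow 2)),
      intervalIntegral.integral_const_mul, intervalIntegral.integral_const_mul,
      quad_expand' _ _ hwM2c hg2c, quad_expand' _ _ hwM1c hg1c,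
      quad_expand _ _ _ hwρc hwMc hgc]
  -- commutation of the cross terms appearing with opposite order
  have hc2 : (∫ x in (0:ℝ)..1, iteratedDeriv 2 wM x * iteratedDeriv 2 g x)
      = ∫ x in (0:ℝ)..1, iteratedDeriv 2 g x * iteratedDeriv 2 wM x :=
    intervalIntegral.integral_congr (fun x _ => mul_comm _ _)
  have hc3 : (∫ x in (0:ℝ)..1, deriv wM x * deriv g x)
      = ∫ x in (0:ℝ)..1, deriv g x * deriv wM x :=
    intervalIntegral.integral_congr (fun x _ => mul_comm _ _)
  have hc4 : (∫ x in (0:ℝ)..1, (κ + deriv ρ x ^ 2) * wM x * g x)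
      = ∫ x in (0:ℝ)..1, (κ + deriv ρ x ^ 2) * g x * wM x :=
    intervalIntegral.integral_congr (fun x _ => by ring)
  -- conclude by linear arithmetic
  have key1 : (∫ x in (0:ℝ)..1, θ x * u x) ≤ ∫ x in (0:ℝ)..1, (θ x * deriv ρ x) * wm x := by
    rw [hQmE] at hQm
    linarith [hT1, hS1, hZg, hT2, hS5, hW1, hS4, hQm, hE]
  have key2 : (∫ x in (0:ℝ)..1, (θ x * deriv ρ x) * wM x) ≤ ∫ x in (0:ℝ)..1, θ x * u x := by
    rw [hQME, hc2, hc3, hc4] at hQM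
    linarith [hT1, hS1, hW3, hS3, hW2, hS6, hZM, hQM, hEM]
  exact ⟨⟨key2, key1⟩, sub_le_sub_left key1 _, sub_le_sub_left key2 _⟩
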